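/- One-period duality gap with puts: Let n = 1 and 𝔓 = {s₀} × 𝔓₁ with 𝔓₁ ⊆ ℝ₊ a closed unbounded set. Let μ be a Borel probability measure on ℝ₊ with μ(𝔓₁) = 1 and ∫ x μ(dx) ≤ s₀. Let G : ℝ₊ → [−∞, ∞) be upper semi-continuous with |G(x)| ≤ K|x| for some constant K, and set β := limsup_{x→∞, x∈𝔓₁} G(x)/x ∈ [−∞, ∞). Then the put-based superhedging price satisfies V^{(p)}_{μ,𝔓}(G) = ∫ G(x) μ(dx) + β⁺ (s₀ − ∫ x μ(dx)), where β⁺ = max(β, 0). In particular, taking G(s₁) = (s₁ − K)⁺ gives V^{(p)}_{μ,𝔓}(G) = ∫(x − K)⁺ μ(dx) + (s₀ − ∫ x μ(dx)), and there is a duality gap whenever ∫ x μ(dx) < s₀. -/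

import Mathlib

open MeasureTheory Set Filter Topology
open scoped ENNReal NNReal Classical

noncomputable section

namespace RobustFin

/-- Canonical path space: the values `S₀, S₁, …, S_n` of the asset. -/
abbrev Path (n : ℕ) := Fin (n + 1) → ℝ

/-- Paths starting at `s₀` with nonnegative coordinates: the canonical space `Ω`. -/
def Omega (n : ℕ) (s₀ : ℝ) : Set (Path n) := {ω | ω 0 = s₀ ∧ ∀ i, 0 ≤ ω i}

/-- The first `j` coordinates `S₁, …, S_j` of a path. -/
def restr {n : ℕ} (j : Fin n) (ω : Path n) : Fin j → ℝ :=
  fun i => ω ⟨(i : ℕ) + 1, by have h1 := i.isLt; have h2 := j.isLt; omega⟩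

/-- The coordinates `S₁, …, S_n` of a path. -/
def tailCoords {n : ℕ} (ω : Path n) : Fin n → ℝ := fun i => ω i.succ

/-- A dynamic trading strategy: bounded measurable positions `Δ_j(S₁,…,S_j)`. -/
structure Dyn (n : ℕ) where
  pos : (j : Fin n) → (Fin j → ℝ) → ℝ
  meas : ∀ j, Measurable (pos j)
  bdd : ∀ j, ∃ C, ∀ x, |pos j x| ≤ C

/-- No short selling: all dynamic positions are nonnegative. -/
def Dyn.Nonneg {n : ℕ} (D : Dyn n) : Prop := ∀ j x, 0 ≤ D.pos j x

/-- Gains from dynamic trading: `Σ_j Δ_j(S₁,…,S_j)(S_{j+1} − S_j)`. -/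
def Dyn.gains {n : ℕ} (D : Dyn n) (ω : Path n) : ℝ :=
  ∑ j : Fin n, D.pos j (restr j ω) * (ω j.succ - ω j.castSucc)

/-- A static option portfolio: a constant (cash) position plus a finite linear
combination of options with maturity indices `idx` and nonnegative strikes. -/
structure Static (n : ℕ) where
  const : ℝ
  m : ℕ
  coeff : Fin m → ℝ
  idx : Fin m → Fin n
  strike : Fin m → ℝ
  strike_nonneg : ∀ k, 0 ≤ strike k

/-- Payoff of the portfolio when the options are call options. -/
def Static.callPayoff {n : ℕ} (X : Static n) (ω : Path n) : ℝ :=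
  X.const + ∑ k, X.coeff k * max (ω (X.idx k).succ - X.strike k) 0

/-- Payoff of the portfolio when the options are put options. -/
def Static.putPayoff {n : ℕ} (X : Static n) (ω : Path n) : ℝ :=
  X.const + ∑ k, X.coeff k * max (X.strike k - ω (X.idx k).succ) 0

/-- Price of a static portfolio, given the unit option prices `c i K`;
this is the (unique) linear pricing functional determined by the prices. -/
def Static.price {n : ℕ} (X : Static n) (c : Fin n → ℝ → ℝ) : ℝ :=
  X.const + ∑ k, X.coeff k * c (X.idx k) (X.strike k)

/-- Expectation of a real payoff, valued in `EReal`, with the convention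
`∞ − ∞ = −∞` (in `EReal`, `⊤ - ⊤ = ⊥`). -/
def eexp {n : ℕ} (P : Measure (Path n)) (f : Path n → ℝ) : EReal :=
  ((∫⁻ ω, ENNReal.ofReal (f ω) ∂P : ℝ≥0∞) : EReal) -
    ((∫⁻ ω, ENNReal.ofReal (-(f ω)) ∂P : ℝ≥0∞) : EReal)

/-- The positive part of an extended real number, in `ℝ≥0∞`. -/
def posE (x : EReal) : ℝ≥0∞ := if x = ⊤ then ⊤ else ENNReal.ofReal x.toReal

/-- Expectation of an `EReal`-valued payoff, with the convention `∞ − ∞ = −∞`. -/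
def eexpE {n : ℕ} (P : Measure (Path n)) (f : Path n → EReal) : EReal :=
  ((∫⁻ ω, posE (f ω) ∂P : ℝ≥0∞) : EReal) - ((∫⁻ ω, posE (-(f ω)) ∂P : ℝ≥0∞) : EReal)

/-- A market calibrated model for the market with static payoffs `pay` (calls or puts),
prices `c` and prediction set `P`. -/
def Calibrated {n : ℕ} (pay : Static n → Path n → ℝ) (c : Fin n → ℝ → ℝ)
    (P : Set (Path n)) (Q : Measure (Path n)) : Prop :=
  IsProbabilityMeasure Q ∧ Q P = 1 ∧
    ∀ (X : Static n) (D : Dyn n), D.Nonneg →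
      eexp Q (fun ω => pay X ω + D.gains ω) ≤ (X.price c : EReal)

/-- A weak free lunch with vanishing risk. -/
def WFLVR {n : ℕ} (pay : Static n → Path n → ℝ) (c : Fin n → ℝ → ℝ)
    (P : Set (Path n)) : Prop :=
  ∃ (Xs : ℕ → Static n) (Ds : ℕ → Dyn n) (X : Static n) (D : Dyn n) (L : ℝ),
    (∀ k, (Ds k).Nonneg) ∧ D.Nonneg ∧
    (∀ ω ∈ P, Tendsto (fun k => pay (Xs k) ω + (Ds k).gains ω) atTop (nhds 0)) ∧
    (∀ k, ∀ ω ∈ P, pay X ω + D.gains ω ≤ pay (Xs k) ω + (Ds k).gains ω) ∧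
    Tendsto (fun k => (Xs k).price c) atTop (nhds L) ∧ L < 0

/-- A robust uniformly strong arbitrage. -/
def RobustArbitrage {n : ℕ} (pay : Static n → Path n → ℝ) (c : Fin n → ℝ → ℝ)
    (P : Set (Path n)) : Prop :=
  ∃ (X : Static n) (D : Dyn n), D.Nonneg ∧ X.price c < 0 ∧
    ∀ ω ∈ P, 0 ≤ pay X ω + D.gains ω

/-- The superhedging price of `G` over semi-static strategies (no short selling). -/
def V {n : ℕ} (pay : Static n → Path n → ℝ) (c : Fin n → ℝ → ℝ)
    (P : Set (Path n)) (G : Path n → EReal) : EReal :=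
  sInf {q : EReal | ∃ (X : Static n) (D : Dyn n), D.Nonneg ∧ q = (X.price c : EReal) ∧
    ∀ ω ∈ P, G ω ≤ ((pay X ω + D.gains ω : ℝ) : EReal)}

/-- The superhedging price of `G` when the dynamic positions may take both signs. -/
def Vsigned {n : ℕ} (pay : Static n → Path n → ℝ) (c : Fin n → ℝ → ℝ)
    (P : Set (Path n)) (G : Path n → EReal) : EReal :=
  sInf {q : EReal | ∃ (X : Static n) (D : Dyn n), q = (X.price c : EReal) ∧
    ∀ ω ∈ P, G ω ≤ ((pay X ω + D.gains ω : ℝ) : EReal)}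

/-- `Π_μ`: probability measures on the path space with marginals `δ_{s₀}, μ₁, …, μ_n`. -/
def PiMu {n : ℕ} (s₀ : ℝ) (μ : Fin n → Measure ℝ) : Set (Measure (Path n)) :=
  {π | IsProbabilityMeasure π ∧ π (Omega n s₀) = 1 ∧
       ∀ i : Fin n, π.map (fun ω => ω i.succ) = μ i}

/-- The coordinate process is a supermartingale in its natural filtration:
for every Borel `A ⊆ ℝ₊^j`, `∫ 1_A(S₁,…,S_j)(S_{j+1} − S_j) dπ ≤ 0`. -/
def IsSupermartingaleLaw {n : ℕ} (π : Measure (Path n)) : Prop :=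
  ∀ (j : Fin n) (A : Set (Fin j → ℝ)), MeasurableSet A →
    ∫ ω, Set.indicator A (fun _ => (1 : ℝ)) (restr j ω) * (ω j.succ - ω j.castSucc) ∂π ≤ 0

/-- `M⁻_μ`: calibrated supermartingale measures. -/
def MSet {n : ℕ} (s₀ : ℝ) (μ : Fin n → Measure ℝ) : Set (Measure (Path n)) :=
  {π ∈ PiMu s₀ μ | IsSupermartingaleLaw π}

/-- `M⁻_{μ,𝔓}`: calibrated supermartingale measures giving full mass to `P`. -/
def MSetP {n : ℕ} (s₀ : ℝ) (μ : Fin n → Measure ℝ) (P : Set (Path n)) :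
    Set (Measure (Path n)) :=
  {π ∈ MSet s₀ μ | π P = 1}

/-- Assumption A on the marginals. -/
def AssumptionA {n : ℕ} (s₀ : ℝ) (μ : Fin n → Measure ℝ) : Prop :=
  (∀ i, ∫ x, x ∂(μ i) ≤ s₀) ∧
  (∀ i j : Fin n, i ≤ j → ∫ x, x ∂(μ j) ≤ ∫ x, x ∂(μ i)) ∧
  (∀ φ : ℝ → ℝ, ConcaveOn ℝ Set.univ φ → Monotone φ → (∀ x, 0 ≤ φ x) →
    ∀ i j : Fin n, i ≤ j → ∫ x, φ x ∂(μ j) ≤ ∫ x, φ x ∂(μ i))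

/-- Condition C (i): each `c_i` is nonnegative, convex and nonincreasing on `ℝ₊`. -/
def CondC1 {n : ℕ} (c : Fin n → ℝ → ℝ) : Prop :=
  ∀ i, (∀ x, 0 ≤ x → 0 ≤ c i x) ∧ ConvexOn ℝ (Set.Ici 0) (c i) ∧ AntitoneOn (c i) (Set.Ici 0)

/-- Condition C (ii): `s₀ ≥ c₁(0) ≥ … ≥ c_n(0) ≥ 0` and `c_i'(0+) ≥ −1`
(the latter expressed, for convex `c_i`, through the slopes at `0`). -/
def CondC2 {n : ℕ} (s₀ : ℝ) (c : Fin n → ℝ → ℝ) : Prop :=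
  (∀ i, c i 0 ≤ s₀) ∧ (∀ i j : Fin n, i ≤ j → c j 0 ≤ c i 0) ∧ (∀ i, 0 ≤ c i 0) ∧
    (∀ i, ∀ K : ℝ, 0 < K → c i 0 - K ≤ c i K)

/-- Condition C (iii): `c_i(K) → 0` as `K → ∞`. -/
def CondC3 {n : ℕ} (c : Fin n → ℝ → ℝ) : Prop :=
  ∀ i, Tendsto (c i) atTop (nhds 0)

/-- Condition C (iv): for every `x ≥ 0`, `c_i(0) − c_i(x)` is nonincreasing in `i`. -/
def CondC4 {n : ℕ} (c : Fin n → ℝ → ℝ) : Prop :=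
  ∀ x : ℝ, 0 ≤ x → ∀ i j : Fin n, i ≤ j → c j 0 - c j x ≤ c i 0 - c i x

/-- Condition C. -/
def CondC {n : ℕ} (s₀ : ℝ) (c : Fin n → ℝ → ℝ) : Prop :=
  CondC1 c ∧ CondC2 s₀ c ∧ CondC3 c ∧ CondC4 c

/-- Condition P (i). -/
def CondP1 {n : ℕ} (p : Fin n → ℝ → ℝ) : Prop :=
  ∀ i, (∀ x, 0 ≤ x → 0 ≤ p i x) ∧ ConvexOn ℝ (Set.Ici 0) (p i) ∧ MonotoneOn (p i) (Set.Ici 0)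

/-- Condition P (ii): `s₀ ≥ lim (x − p₁(x)) ≥ … ≥ 0` and `0 ≤ p_i'(0+) ≤ 1`. -/
def CondP2 {n : ℕ} (s₀ : ℝ) (p : Fin n → ℝ → ℝ) : Prop :=
  (∃ L : Fin n → ℝ,
    (∀ i, Tendsto (fun x => x - p i x) atTop (nhds (L i))) ∧
    (∀ i, L i ≤ s₀) ∧ (∀ i j : Fin n, i ≤ j → L j ≤ L i) ∧ (∀ i, 0 ≤ L i)) ∧
  (∃ d : Fin n → ℝ,
    (∀ i, Tendsto (fun K => (p i K - p i 0) / K) (nhdsWithin 0 (Set.Ioi 0)) (nhds (d i))) ∧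
    (∀ i, 0 ≤ d i ∧ d i ≤ 1))

/-- Condition P (iii): `p_i(K) → 0` as `K → 0` (within `ℝ₊`). -/
def CondP3 {n : ℕ} (p : Fin n → ℝ → ℝ) : Prop :=
  ∀ i, Tendsto (p i) (nhdsWithin 0 (Set.Ici 0)) (nhds 0)

/-- Condition P (iv): `p_i(x)` is nondecreasing in `i`. -/
def CondP4 {n : ℕ} (p : Fin n → ℝ → ℝ) : Prop :=
  ∀ x : ℝ, 0 ≤ x → ∀ i j : Fin n, i ≤ j → p i x ≤ p j x

/-- Condition P. -/
def CondP {n : ℕ} (s₀ : ℝ) (p : Fin n → ℝ → ℝ) : Prop :=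
  CondP1 p ∧ CondP2 s₀ p ∧ CondP3 p ∧ CondP4 p

/-- The measures `μ_i` defined from the put prices by `μ_i([0,K]) = p_i'(K)`;
equivalently, `p_i(K) = ∫ (K − x)⁺ μ_i(dx)`. -/
def PutPricesFrom {n : ℕ} (p : Fin n → ℝ → ℝ) (μ : Fin n → Measure ℝ) : Prop :=
  (∀ i, IsProbabilityMeasure (μ i)) ∧ (∀ i, μ i (Set.Iio 0) = 0) ∧
  (∀ i, Integrable (fun x => x) (μ i)) ∧
  (∀ i, ∀ K : ℝ, 0 ≤ K → p i K = ∫ x, max (K - x) 0 ∂(μ i))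

/-- The path `(s₀, s₁, …, s_i, x, s_{i+2}, …, s_n)`. -/
def mkPath {n : ℕ} (s₀ : ℝ) (i : Fin n) (s : Fin i → ℝ) (x : ℝ)
    (t : Fin (n - ((i : ℕ) + 1)) → ℝ) : Path n := fun j =>
  if h0 : (j : ℕ) = 0 then s₀
  else if h1 : (j : ℕ) ≤ (i : ℕ) then
    s ⟨(j : ℕ) - 1, by have := j.isLt; have := i.isLt; omega⟩
  else if h2 : (j : ℕ) = (i : ℕ) + 1 then x
  else t ⟨(j : ℕ) - (i : ℕ) - 2, by have := j.isLt; have := i.isLt; omega⟩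

/-- The family `β_i : ℝ₊^i → ℝ` defined recursively by `β_n = 0` and
`β_i(s₁,…,s_i) = (sup_{s_{i+2},…,s_n} limsup_{x→∞} ((β_{i+1}(s₁,…,s_i,x)
 + G(s₁,…,s_i,x,s_{i+2},…,s_n)/x)·1_𝔓)) ∨ 0`. -/
def IsBetaFamily {n : ℕ} (s₀ : ℝ) (P : Set (Path n)) (G : (Fin n → ℝ) → EReal)
    (β : (i : Fin (n + 1)) → (Fin i → ℝ) → ℝ) : Prop :=
  (∀ s, β (Fin.last n) s = 0) ∧
  ∀ (i : Fin n) (s : Fin i → ℝ), (∀ k, 0 ≤ s k) →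
    (β ⟨(i : ℕ), by have := i.isLt; omega⟩ s : EReal) =
      max 0 (⨆ (t : Fin (n - ((i : ℕ) + 1)) → ℝ) (_ : ∀ k, 0 ≤ t k),
        Filter.limsup (fun x : ℝ =>
          if mkPath s₀ i s x t ∈ P then
            ((β ⟨(i : ℕ) + 1, by have := i.isLt; omega⟩ (Fin.snoc s x) : ℝ) : EReal)
              + G (tailCoords (mkPath s₀ i s x t)) * ((x⁻¹ : ℝ) : EReal)
          else 0) Filter.atTop)

/-- Gains of the dynamic strategy `(β_i)`: `β₀(S₁ − s₀) + Σ_i β_i(S₁,…,S_i)(S_{i+1} − S_i)`. -/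
def gainsOf {n : ℕ} (β : (i : Fin (n + 1)) → (Fin i → ℝ) → ℝ) (ω : Path n) : ℝ :=
  ∑ j : Fin n, β ⟨(j : ℕ), by have := j.isLt; omega⟩ (restr j ω) * (ω j.succ - ω j.castSucc)

/-- The penalty function `λ_𝔓(s₁,…,s_n) = (1 + s₁ + … + s_n)·1{(s₁,…,s_n) ∉ 𝔓}`. -/
def lambdaP {n : ℕ} (P : Set (Path n)) (ω : Path n) : ℝ :=
  if ω ∈ P then 0 else 1 + ∑ i : Fin n, ω i.succ

/-- `min(s₀, s₁, …, s_m)`. -/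
def pmin {m : ℕ} (s₀ : ℝ) (s : Fin m → ℝ) : ℝ :=
  Finset.univ.inf' Finset.univ_nonempty
    (fun j : Fin (m + 1) =>
      if h : (j : ℕ) = 0 then s₀ else s ⟨(j : ℕ) - 1, by have := j.isLt; omega⟩)

/-- `max(s₀, s₁, …, s_m)`. -/
def pmax {m : ℕ} (s₀ : ℝ) (s : Fin m → ℝ) : ℝ :=
  Finset.univ.sup' Finset.univ_nonempty
    (fun j : Fin (m + 1) =>
      if h : (j : ℕ) = 0 then s₀ else s ⟨(j : ℕ) - 1, by have := j.isLt; omega⟩)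


/-- Slopes of the piecewise linear interpolation. -/
def PLslope (N : ℕ) (t v : ℕ → ℝ) (k : ℕ) : ℝ :=
  if k < N then (v (k + 1) - v k) / (t (k + 1) - t k) else 0

/-- Piecewise linear function written as constant plus a combination of puts. -/
def PL (N : ℕ) (t v : ℕ → ℝ) (x : ℝ) : ℝ :=
  v N + ∑ k ∈ Finset.range N, (PLslope N t v (k + 1) - PLslope N t v k) * max (t (k + 1) - x) 0

variable {N : ℕ} {t v : ℕ → ℝ}

lemma PL_t_mono (hstep : ∀ k < N, t k < t (k + 1)) {j k : ℕ} (hjk : j ≤ k) (hk : k ≤ N) :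
    t j ≤ t k := by
  induction k with
  | zero => simp_all
  | succ m ih =>
    rcases Nat.lt_or_ge j (m + 1) with h | h
    · exact le_trans (ih (by omega) (by omega)) (le_of_lt (hstep m (by omega)))
    · have : j = m + 1 := by omega
      simp [this]

lemma PL_top (hstep : ∀ k < N, t k < t (k + 1)) {x : ℝ} (hx : t N ≤ x) :
    PL N t v x = v N := by
  unfold PL
  have : ∀ k ∈ Finset.range N,
      (PLslope N t v (k + 1) - PLslope N t v k) * max (t (k + 1) - x) 0 = 0 := by
    intro k hk
    rw [Finset.mem_range] at hk
    have : t (k + 1) ≤ x := le_trans (PL_t_mono hstep (by omega) le_rfl) hx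
    rw [max_eq_right (by linarith)]
    ring
  rw [Finset.sum_congr rfl this]
  simp

lemma PL_diff (hstep : ∀ k < N, t k < t (k + 1)) {j : ℕ} (hj : j < N) {x : ℝ}
    (hx1 : t j ≤ x) (hx2 : x ≤ t (j + 1)) :
    PL N t v x = PL N t v (t (j + 1)) + PLslope N t v j * (x - t (j + 1)) := by
  have key : ∀ k ∈ Finset.range N,
      (PLslope N t v (k + 1) - PLslope N t v k) * max (t (k + 1) - x) 0
        - (PLslope N t v (k + 1) - PLslope N t v k) * max (t (k + 1) - t (j + 1)) 0
      = (PLslope N t v (k + 1) - PLslope N t v k) * (t (j + 1) - x) * (if j ≤ k then 1 else 0) := by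
    intro k hk
    rw [Finset.mem_range] at hk
    by_cases hjk : j ≤ k
    · have h1 : x ≤ t (k + 1) := le_trans hx2 (PL_t_mono hstep (by omega) (by omega))
      have h2 : t (j + 1) ≤ t (k + 1) := PL_t_mono hstep (by omega) (by omega)
      rw [max_eq_left (by linarith), max_eq_left (by linarith), if_pos hjk]
      ring
    · have h1 : t (k + 1) ≤ t j := PL_t_mono hstep (by omega) (by omega)
      rw [max_eq_right (by linarith), max_eq_right (by linarith), if_neg hjk]
      ring
  have sum_eq : ∑ k ∈ Finset.range N,
      ((PLslope N t v (k + 1) - PLslope N t v k) * (t (j + 1) - x) * (if j ≤ k then 1 else 0))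
      = (∑ k ∈ Finset.Ico j N, (PLslope N t v (k + 1) - PLslope N t v k)) * (t (j + 1) - x) := by
    rw [Finset.sum_mul]
    have hsub : Finset.Ico j N ⊆ Finset.range N := by
      intro k hk
      rw [Finset.mem_Ico] at hk
      exact Finset.mem_range.2 hk.2
    rw [← Finset.sum_subset hsub (by
      intro k hk hk2
      rw [Finset.mem_range] at hk
      rw [Finset.mem_Ico] at hk2
      rw [if_neg (by omega)]
      ring)]
    refine Finset.sum_congr rfl fun k hk => ?_
    rw [Finset.mem_Ico] at hk
    rw [if_pos hk.1]
    ring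
  have tel : ∑ k ∈ Finset.Ico j N, (PLslope N t v (k + 1) - PLslope N t v k)
      = PLslope N t v N - PLslope N t v j := by
    rw [Finset.sum_Ico_eq_sub _ (le_of_lt hj), Finset.sum_range_sub, Finset.sum_range_sub]
    ring
  have hmmN : PLslope N t v N = 0 := by simp [PLslope]
  have expand : PL N t v x - PL N t v (t (j + 1)) =
      ∑ k ∈ Finset.range N,
      ((PLslope N t v (k + 1) - PLslope N t v k) * max (t (k + 1) - x) 0
        - (PLslope N t v (k + 1) - PLslope N t v k) * max (t (k + 1) - t (j + 1)) 0) := by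
    unfold PL
    rw [Finset.sum_sub_distrib]
    ring
  rw [Finset.sum_congr rfl key, sum_eq, tel, hmmN] at expand
  linarith [expand]

lemma PL_knot (hstep : ∀ k < N, t k < t (k + 1)) {j : ℕ} (hj : j ≤ N) :
    PL N t v (t j) = v j := by
  obtain ⟨d, hd⟩ : ∃ d, N = j + d := ⟨N - j, by omega⟩
  induction d generalizing j with
  | zero =>
    have : j = N := by omega
    subst this
    exact PL_top hstep le_rfl
  | succ m ih =>
    have hjN : j < N := by omega
    have hrec : PL N t v (t (j + 1)) = v (j + 1) := ih (by omega) (by omega)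
    have := PL_diff (v := v) hstep hjN (le_refl (t j)) (le_of_lt (hstep j hjN))
    rw [hrec, PLslope, if_pos hjN] at this
    rw [this]
    have hne : t (j + 1) - t j ≠ 0 := by have := hstep j hjN; linarith
    field_simp
    ring

lemma PL_seg (hstep : ∀ k < N, t k < t (k + 1)) {j : ℕ} (hj : j < N) {x : ℝ}
    (hx1 : t j ≤ x) (hx2 : x ≤ t (j + 1)) :
    PL N t v x = v (j + 1) + PLslope N t v j * (x - t (j + 1)) := by
  rw [PL_diff hstep hj hx1 hx2, PL_knot hstep (by omega)]

lemma PL_seg_bounds (hstep : ∀ k < N, t k < t (k + 1)) {j : ℕ} (hj : j < N) {x : ℝ}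
    (hx1 : t j ≤ x) (hx2 : x ≤ t (j + 1)) :
    min (v j) (v (j + 1)) ≤ PL N t v x ∧ PL N t v x ≤ max (v j) (v (j + 1)) := by
  rw [PL_seg hstep hj hx1 hx2, PLslope, if_pos hj]
  have hD : 0 < t (j + 1) - t j := by have := hstep j hj; linarith
  rcases le_total (v j) (v (j + 1)) with h | h
  · constructor
    · rw [min_eq_left h]
      have : (v (j + 1) - v j) / (t (j + 1) - t j) * (x - t (j + 1))
          ≥ (v (j + 1) - v j) / (t (j + 1) - t j) * (t j - t (j + 1)) := by
        apply mul_le_mul_of_nonneg_left (by linarith) (div_nonneg (by linarith) (by linarith))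
      have heq : (v (j + 1) - v j) / (t (j + 1) - t j) * (t j - t (j + 1)) = -(v (j+1) - v j) := by
        field_simp
        ring
      linarith
    · rw [max_eq_right h]
      have : (v (j + 1) - v j) / (t (j + 1) - t j) * (x - t (j + 1)) ≤ 0 :=
        mul_nonpos_of_nonneg_of_nonpos (div_nonneg (by linarith) (by linarith)) (by linarith)
      linarith
  · constructor
    · rw [min_eq_right h]
      have hq : (v (j + 1) - v j) / (t (j + 1) - t j) ≤ 0 :=
        div_nonpos_of_nonpos_of_nonneg (by linarith) (by linarith)
      nlinarith [mul_nonneg (neg_nonneg.2 hq) (sub_nonneg.2 hx2)]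
    · rw [max_eq_left h]
      have : (v (j + 1) - v j) / (t (j + 1) - t j) * (x - t (j + 1))
          ≤ (v (j + 1) - v j) / (t (j + 1) - t j) * (t j - t (j + 1)) := by
        apply mul_le_mul_of_nonpos_left (by linarith) (div_nonpos_of_nonpos_of_nonneg (by linarith) (by linarith))
      have heq : (v (j + 1) - v j) / (t (j + 1) - t j) * (t j - t (j + 1)) = -(v (j+1) - v j) := by
        field_simp
        ring
      linarith

lemma usc_ite {S : Set ℝ} (hS : IsClosed S) (hS0 : S ⊆ Set.Ici 0) {f : ℝ → ℝ}
    (hf : UpperSemicontinuousOn f (Set.Ici 0)) {cst : ℝ} (hle : ∀ x ∈ S, cst ≤ f x)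
    {g : ℝ → ℝ} (hg : ∀ x ∈ S, g x = f x) (hg2 : ∀ x ∉ S, g x = cst) :
    UpperSemicontinuous g := by
  intro x c hc
  by_cases hx : x ∈ S
  · rw [hg x hx] at hc
    have h1 : ∀ᶠ z in 𝓝[Set.Ici 0] x, f z < c := hf x (hS0 hx) c hc
    rw [eventually_nhdsWithin_iff] at h1
    filter_upwards [h1] with z hz
    by_cases hzS : z ∈ S
    · rw [hg z hzS]; exact hz (hS0 hzS)
    · rw [hg2 z hzS]; exact lt_of_le_of_lt (hle x hx) hc
  · rw [hg2 x hx] at hc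
    filter_upwards [hS.isOpen_compl.eventually_mem hx] with z hz
    rw [hg2 z hz]
    exact hc

lemma fin_one_succ_eq : (Fin.succ (0 : Fin 1)) = (1 : Fin 2) := rfl

lemma static_payoff (X : Static 1) (ω : Path 1) :
    X.putPayoff ω = X.const + ∑ k, X.coeff k * max (X.strike k - ω 1) 0 := by
  unfold Static.putPayoff
  congr 1
  refine Finset.sum_congr rfl fun k _ => ?_
  have : X.idx k = 0 := Subsingleton.elim _ _
  rw [this, fin_one_succ_eq]

lemma integrable_of_ae_bounded {μ : Measure ℝ} [IsProbabilityMeasure μ]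
    {f : ℝ → ℝ} (hm : AEStronglyMeasurable f μ) {C : ℝ} (h : ∀ᵐ x ∂μ, |f x| ≤ C) :
    Integrable f μ :=
  Integrable.mono' (integrable_const C) hm (by simpa [Real.norm_eq_abs] using h)

lemma ae_nonneg_of_null_Iio {μ : Measure ℝ} (h0 : μ (Set.Iio 0) = 0) :
    ∀ᵐ x ∂μ, 0 ≤ x := by
  rw [MeasureTheory.ae_iff]
  convert h0 using 2
  ext x
  simp

lemma integrable_put {μ : Measure ℝ} [IsProbabilityMeasure μ] (h0 : μ (Set.Iio 0) = 0)
    {K' : ℝ} (hK : 0 ≤ K') : Integrable (fun x => max (K' - x) 0) μ := by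
  refine integrable_of_ae_bounded (C := max K' 0) ((continuous_const.sub continuous_id').max continuous_const).aestronglyMeasurable ?_
  filter_upwards [ae_nonneg_of_null_Iio h0] with x hx
  rw [abs_of_nonneg (le_max_right _ _)]
  apply max_le (le_max_of_le_left (by linarith)) (le_max_right _ _)

lemma static_price_integral {μ : Measure ℝ} [IsProbabilityMeasure μ] (h0 : μ (Set.Iio 0) = 0)
    (X : Static 1) (hK : ∀ k, 0 ≤ X.strike k) :
    X.price (fun _ K' => ∫ x, max (K' - x) 0 ∂μ)
      = ∫ x, (X.const + ∑ k, X.coeff k * max (X.strike k - x) 0) ∂μ := by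
  unfold Static.price
  rw [integral_add (integrable_const _)]
  · rw [integral_const]
    simp only [measure_univ, probReal_univ, ENNReal.toReal_one, one_smul]
    congr 1
    rw [integral_finset_sum]
    · exact Finset.sum_congr rfl fun k _ => by rw [integral_const_mul]
    · exact fun k _ => (integrable_put h0 (hK k)).const_mul _
  · exact integrable_finset_sum _ fun k _ => (integrable_put h0 (hK k)).const_mul _


lemma usc_extend_measurable {f : ℝ → ℝ} (hf : UpperSemicontinuousOn f (Set.Ici 0))
    (hf0 : f 0 = 0) : Measurable (fun x => if 0 ≤ x then f x else 0) := by
  apply UpperSemicontinuous.measurable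
  intro x c hc
  simp only at hc ⊢
  rcases lt_trichotomy x 0 with hx | hx | hx
  · rw [if_neg (not_le.2 hx)] at hc
    filter_upwards [isOpen_Iio.eventually_mem hx] with z hz
    rw [Set.mem_Iio] at hz
    rw [if_neg (not_le.2 hz)]
    exact hc
  · subst hx
    rw [if_pos le_rfl] at hc
    have h1 := hf 0 Set.self_mem_Ici c hc
    rw [eventually_nhdsWithin_iff] at h1
    filter_upwards [h1] with z hz
    by_cases hz0 : 0 ≤ z
    · rw [if_pos hz0]; exact hz hz0
    · rw [if_neg hz0]; rw [hf0] at hc; exact hc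
  · rw [if_pos hx.le] at hc
    have h1 := hf x (le_of_lt hx) c hc
    rw [eventually_nhdsWithin_iff] at h1
    filter_upwards [h1, isOpen_Ioi.eventually_mem hx] with z hz hz2
    rw [Set.mem_Ioi] at hz2
    rw [if_pos hz2.le]
    exact hz hz2.le

lemma neBot_atTop_inf_principal {P1 : Set ℝ} (hP1unb : ¬ BddAbove P1) :
    (atTop ⊓ Filter.principal P1).NeBot := by
  rw [Filter.inf_principal_neBot_iff]
  intro U hU
  obtain ⟨a, ha⟩ := mem_atTop_sets.1 hU
  obtain ⟨y, hy1, hy2⟩ := not_bddAbove_iff.1 hP1unb a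
  exact ⟨y, ha y hy2.le, hy1⟩

lemma tendsto_div_two_pow (T : ℝ) : Tendsto (fun n : ℕ => T / 2 ^ n) atTop (𝓝 0) := by
  have h1 : Tendsto (fun n : ℕ => ((1:ℝ)/2) ^ n) atTop (𝓝 0) := by
    apply tendsto_pow_atTop_nhds_zero_of_lt_one <;> norm_num
  have h2 := h1.const_mul T
  rw [mul_zero] at h2
  refine h2.congr fun n => ?_
  rw [div_pow, one_pow, mul_one_div]

set_option maxHeartbeats 2000000 in
lemma main_duality {s₀ : ℝ} (hs₀ : 0 < s₀)
    (P1 : Set ℝ) (hP1closed : IsClosed P1) (hP1sub : P1 ⊆ Set.Ici 0)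
    (hP1unb : ¬ BddAbove P1)
    (μ : Measure ℝ) (hprob : IsProbabilityMeasure μ) (hμP1 : μ P1 = 1)
    (hmom : Integrable (fun x => x) μ) (hmean : ∫ x, x ∂μ ≤ s₀)
    (G : ℝ → ℝ) (K : ℝ) (hG : ∀ x, |G x| ≤ K * |x|)
    (hGusc : UpperSemicontinuousOn G (Set.Ici 0))
    (β : ℝ) (hβ : Filter.limsup (fun x => G x / x) (atTop ⊓ Filter.principal P1) = β) :
    V (n := 1) Static.putPayoff (fun _ K' => ∫ x, max (K' - x) 0 ∂μ)
        {ω : Path 1 | ω 0 = s₀ ∧ ω 1 ∈ P1} (fun ω => ((G (ω 1) : ℝ) : EReal)) =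
      ((∫ x, G x ∂μ + max β 0 * (s₀ - ∫ x, x ∂μ) : ℝ) : EReal) := by
  have hcompl : μ P1ᶜ = 0 := by
    rw [measure_compl hP1closed.measurableSet (measure_ne_top μ P1), hμP1, measure_univ,
      tsub_self]
  have h0 : μ (Set.Iio 0) = 0 := by
    refine le_antisymm (le_trans (measure_mono ?_) hcompl.le) (zero_le)
    intro x hx hx2
    rw [Set.mem_Iio] at hx
    exact absurd (hP1sub hx2) (by simp only [Set.mem_Ici, not_le]; exact hx)
  have haeP1 : ∀ᵐ x ∂μ, x ∈ P1 := by
    rw [MeasureTheory.ae_iff]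
    exact hcompl
  have hae0 : ∀ᵐ x ∂μ, 0 ≤ x := ae_nonneg_of_null_Iio h0
  have hK0 : 0 ≤ K := by
    have := hG 1
    have h2 : (0:ℝ) ≤ |G 1| := abs_nonneg _
    simpa using le_trans h2 this
  have hG0 : G 0 = 0 := by
    have := hG 0
    simp only [abs_zero, mul_zero] at this
    exact abs_eq_zero.1 (le_antisymm this (abs_nonneg _))
  have hmean0 : 0 ≤ ∫ x, x ∂μ := integral_nonneg_of_ae hae0
  -- measurable version of G
  set G'' : ℝ → ℝ := fun x => if 0 ≤ x then G x else 0 with hG''def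
  have hG''meas : Measurable G'' := usc_extend_measurable hGusc hG0
  have hG''bd : ∀ x, |G'' x| ≤ K * |x| := by
    intro x
    by_cases hx : 0 ≤ x
    · simpa [hG''def, hx] using hG x
    · simp only [hG''def, if_neg hx, abs_zero]
      positivity
  have hG''int : Integrable G'' μ := by
    refine Integrable.mono' (hmom.abs.const_mul K) hG''meas.aestronglyMeasurable ?_
    filter_upwards with x
    simpa [Real.norm_eq_abs] using hG''bd x
  have hGG'' : (fun x => G x) =ᵐ[μ] G'' := by
    filter_upwards [hae0] with x hx
    simp [hG''def, hx]
  have hGint : Integrable G μ := hG''int.congr hGG''.symm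
  have hintG_eq : ∫ x, G x ∂μ = ∫ x, G'' x ∂μ := integral_congr_ae hGG''
  haveI hFne : (atTop ⊓ Filter.principal P1).NeBot := neBot_atTop_inf_principal hP1unb
  have hFbdd : IsBoundedUnder (· ≤ ·) (atTop ⊓ Filter.principal P1) (fun x => G x / x) := by
    refine ⟨K, ?_⟩
    rw [Filter.eventually_map, Filter.eventually_inf_principal]
    filter_upwards [eventually_ge_atTop (1:ℝ)] with x hx _
    rw [div_le_iff₀ (by linarith)]
    calc G x ≤ |G x| := le_abs_self _
    _ ≤ K * |x| := hG x
    _ = K * x := by rw [abs_of_nonneg (by linarith)]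
  have hFcobdd : IsCoboundedUnder (· ≤ ·) (atTop ⊓ Filter.principal P1) (fun x => G x / x) := by
    refine IsBoundedUnder.isCoboundedUnder_le ⟨-K, ?_⟩
    rw [Filter.eventually_map, Filter.eventually_inf_principal]
    filter_upwards [eventually_ge_atTop (1:ℝ)] with x hx _
    rw [le_div_iff₀ (by linarith)]
    have h1 : -(K * |x|) ≤ G x := neg_le_of_abs_le (hG x)
    rw [abs_of_nonneg (by linarith)] at h1
    nlinarith
  set val : ℝ := ∫ x, G x ∂μ + max β 0 * (s₀ - ∫ x, x ∂μ) with hval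
  apply le_antisymm
  · -- upper bound
    have hub : ∀ ε : ℝ, 0 < ε →
        V (n := 1) Static.putPayoff (fun _ K' => ∫ x, max (K' - x) 0 ∂μ)
          {ω : Path 1 | ω 0 = s₀ ∧ ω 1 ∈ P1} (fun ω => ((G (ω 1) : ℝ) : EReal))
          ≤ ((val + ε : ℝ) : EReal) := by
      intro ε hε
      set b : ℝ := max β 0 with hbdef
      have hb0 : 0 ≤ b := le_max_right _ _
      have hβb : β ≤ b := le_max_left _ _
      set ε' : ℝ := ε / (4 * (s₀ + 1)) with hε'def
      have hε' : 0 < ε' := div_pos hε (by positivity)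
      set Δ : ℝ := b + ε' with hΔdef
      have hΔpos : 0 < Δ := add_pos_of_nonneg_of_pos hb0 hε'
      have hKΔ : 0 ≤ K + Δ := by linarith
      -- Step A: G x - Δ (x - s₀) ≤ 0 far out on P1
      have hev : ∀ᶠ x in atTop ⊓ Filter.principal P1, G x / x < β + ε'/2 :=
        Filter.eventually_lt_of_limsup_lt (by rw [hβ]; linarith) hFbdd
      rw [Filter.eventually_inf_principal] at hev
      obtain ⟨R, hR⟩ := eventually_atTop.1 hev
      set R' : ℝ := max (max R 1) (2*Δ*s₀/ε' + 1) with hR'def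
      have hR'1 : 1 ≤ R' := le_trans (le_max_right R 1) (le_max_left _ _)
      have hA : ∀ x ∈ P1, R' ≤ x → G x - Δ * (x - s₀) ≤ 0 := by
        intro x hx hxR
        have hx1 : 1 ≤ x := le_trans hR'1 hxR
        have h1 : G x / x < β + ε'/2 :=
          hR x (le_trans (le_trans (le_max_left R 1) (le_max_left _ _)) hxR) hx
        rw [div_lt_iff₀ (by linarith)] at h1
        have h2 : 2*Δ*s₀/ε' + 1 ≤ x := le_trans (le_max_right _ _) hxR
        have h3 : 2*(Δ*s₀) ≤ ε' * x := by
          have h3' : 2*Δ*s₀/ε' ≤ x := by linarith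
          rw [div_le_iff₀ hε'] at h3'
          nlinarith
        have h4 : 0 ≤ (b - β) * x := mul_nonneg (by linarith) (by linarith)
        have h5 : Δ * x = b * x + ε' * x := by rw [hΔdef]; ring
        nlinarith
      -- tail control
      set Ψ : ℝ → ℝ := fun x => 3*(K+Δ)*|x| + 2*Δ*s₀ + 1 with hΨdef
      have hΨcont : Continuous Ψ := ((continuous_const.mul continuous_abs).add
        continuous_const).add continuous_const
      have hΨnn : ∀ x, 0 ≤ Ψ x := by
        intro x
        have h6 : 0 ≤ 3*(K+Δ)*|x| := mul_nonneg (by linarith) (abs_nonneg x)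
        have h7 : 0 ≤ Δ*s₀ := mul_nonneg hΔpos.le hs₀.le
        simp only [hΨdef]
        linarith
      have hΨint : Integrable Ψ μ := by
        have h8 : Integrable (fun x : ℝ => 3*(K+Δ)*|x|) μ := hmom.abs.const_mul _
        exact (h8.add (integrable_const _)).add (integrable_const _)
      have htail0 : Tendsto (fun n : ℕ => ∫ x, Set.indicator (Set.Ici ((n:ℝ))) Ψ x ∂μ)
          atTop (𝓝 0) := by
        have h9 := tendsto_integral_of_dominated_convergence (μ := μ)
          (F := fun (n : ℕ) (x : ℝ) => Set.indicator (Set.Ici ((n:ℝ))) Ψ x)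
          (f := fun _ => (0:ℝ)) (bound := Ψ)
          (fun n => (hΨcont.measurable.indicator measurableSet_Ici).aestronglyMeasurable)
          hΨint
          (by
            intro n
            filter_upwards with x
            rw [Real.norm_eq_abs]
            by_cases hx : x ∈ Set.Ici ((n:ℝ))
            · rw [Set.indicator_of_mem hx, abs_of_nonneg (hΨnn x)]
            · rw [Set.indicator_of_notMem hx, abs_zero]; exact hΨnn x)
          (by
            filter_upwards with x
            obtain ⟨n₀, hn₀⟩ := exists_nat_gt x
            refine tendsto_const_nhds.congr' ?_
            rw [EventuallyEq, eventually_atTop]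
            refine ⟨n₀, fun m hm => ?_⟩
            rw [Set.indicator_of_notMem]
            simp only [Set.mem_Ici, not_le]
            have : (n₀:ℝ) ≤ (m:ℝ) := Nat.cast_le.2 hm
            linarith)
        simpa using h9
      obtain ⟨T0, hT0⟩ := (htail0.eventually
        (gt_mem_nhds (show (0:ℝ) < ε/8 by positivity))).exists
      set T : ℝ := max (T0:ℝ) (max R' 1) with hTdef
      have hT1 : 1 ≤ T := le_trans (le_max_right R' 1) (le_max_right _ _)
      have hTpos : 0 < T := lt_of_lt_of_le one_pos hT1
      have hTR' : R' ≤ T := le_trans (le_max_left R' 1) (le_max_right _ _)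
      have htail : ∫ x, Set.indicator (Set.Ici T) Ψ x ∂μ ≤ ε/8 := by
        refine le_trans (integral_mono_ae (hΨint.indicator measurableSet_Ici)
          (hΨint.indicator measurableSet_Ici) ?_) hT0.le
        filter_upwards with x
        by_cases hx : x ∈ Set.Ici T
        · rw [Set.indicator_of_mem hx, Set.indicator_of_mem
            (show x ∈ Set.Ici ((T0:ℝ)) from Set.mem_Ici.2 (le_trans (le_max_left _ _) (Set.mem_Ici.1 hx)))]
        · rw [Set.indicator_of_notMem hx]
          exact Set.indicator_nonneg (fun y _ => hΨnn y) x
      -- truncated obstacle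
      set H : ℝ → ℝ := fun x => G x - Δ * (x - s₀) with hHdef
      set S : Set ℝ := P1 ∩ Set.Icc 0 T with hSdef
      have hSclosed : IsClosed S := hP1closed.inter isClosed_Icc
      have hSsub : S ⊆ Set.Ici 0 := fun x hx => hx.2.1
      set M : ℝ := (K + Δ) * T with hMdef
      have hM0 : 0 ≤ M := mul_nonneg hKΔ hTpos.le
      set UB : ℝ := max (K*T + Δ*s₀) 0 with hUBdef
      have hUB0 : 0 ≤ UB := le_max_right _ _
      have hUBeq : UB = K*T + Δ*s₀ := max_eq_left
        (add_nonneg (mul_nonneg hK0 hTpos.le) (mul_nonneg hΔpos.le hs₀.le))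
      have hHlb : ∀ x ∈ S, -M ≤ H x := by
        rintro x ⟨hx1, hx2, hx3⟩
        have h10 : -(K * |x|) ≤ G x := neg_le_of_abs_le (hG x)
        rw [abs_of_nonneg hx2] at h10
        have h11 : (K+Δ)*x ≤ (K+Δ)*T := mul_le_mul_of_nonneg_left hx3 hKΔ
        have h12 : 0 ≤ Δ*s₀ := mul_nonneg hΔpos.le hs₀.le
        simp only [hHdef, hMdef]
        nlinarith
      have hHub : ∀ x ∈ S, H x ≤ K*T + Δ*s₀ := by
        rintro x ⟨hx1, hx2, hx3⟩
        have h10 : G x ≤ K * |x| := le_of_abs_le (hG x)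
        rw [abs_of_nonneg hx2] at h10
        have h11 : K*x ≤ K*T := mul_le_mul_of_nonneg_left hx3 hK0
        have h12 : 0 ≤ Δ*x := mul_nonneg hΔpos.le hx2
        simp only [hHdef]
        nlinarith
      set H₂ : ℝ → ℝ := fun x => if x ∈ S then H x else -M with hH₂def
      have hH₂lb : ∀ x, -M ≤ H₂ x := by
        intro x
        by_cases hx : x ∈ S
        · simp only [hH₂def, if_pos hx]; exact hHlb x hx
        · simp only [hH₂def, if_neg hx]
          exact le_refl _
      have hH₂ub : ∀ x, H₂ x ≤ UB := by
        intro x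
        by_cases hx : x ∈ S
        · simp only [hH₂def, if_pos hx]; rw [hUBeq]; exact hHub x hx
        · simp only [hH₂def, if_neg hx]; linarith
      have hHusc : UpperSemicontinuousOn H (Set.Ici 0) := by
        have h13 : UpperSemicontinuousOn (fun x : ℝ => -(Δ * (x - s₀))) (Set.Ici 0) :=
          (((continuous_const.mul (continuous_id'.sub continuous_const)).neg).upperSemicontinuous).upperSemicontinuousOn _
        have h14 := hGusc.add h13
        simp only [hHdef, sub_eq_add_neg]
        exact h14
      have hH₂usc : UpperSemicontinuous H₂ :=
        usc_ite hSclosed hSsub hHusc hHlb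
          (fun x hx => by simp [hH₂def, hx]) (fun x hx => by simp [hH₂def, hx])
      have hH₂meas : Measurable H₂ := hH₂usc.measurable
      have hH₂int : Integrable H₂ μ := by
        refine integrable_of_ae_bounded (C := max M UB) hH₂meas.aestronglyMeasurable ?_
        filter_upwards with x
        rw [abs_le]
        refine ⟨by linarith [hH₂lb x, le_max_left M UB], by linarith [hH₂ub x, le_max_right M UB]⟩
      -- grids
      set tt : ℕ → ℕ → ℝ := fun n k => (k:ℝ) * (T / 2^n) with httdef
      set vv : ℕ → ℕ → ℝ := fun n k =>
        if k = 2^n then max (sSup (H₂ '' Set.Icc (tt n k - T/2^n) (tt n k + T/2^n))) 0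
        else sSup (H₂ '' Set.Icc (tt n k - T/2^n) (tt n k + T/2^n)) with hvvdef
      set gg : ℕ → ℝ → ℝ := fun n => PL (2^n) (tt n) (vv n) with hggdef
      have hhpos : ∀ n : ℕ, 0 < T / 2^n := fun n => by positivity
      have httsucc : ∀ n k, tt n (k+1) = tt n k + T/2^n := by
        intro n k; simp only [httdef]; push_cast; ring
      have hstep : ∀ n, ∀ k < 2^n, tt n k < tt n (k+1) := by
        intro n k _
        rw [httsucc]
        linarith [hhpos n]
      have htt0 : ∀ n, tt n 0 = 0 := by intro n; simp [httdef]
      have httN : ∀ n, tt n (2^n) = T := by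
        intro n; simp only [httdef]; push_cast; field_simp
      have httnn : ∀ n k, 0 ≤ tt n k := fun n k => by
        simp only [httdef]; positivity
      have hbddim : ∀ s : Set ℝ, BddAbove (H₂ '' s) := fun s =>
        ⟨UB, by rintro y ⟨z, _, rfl⟩; exact hH₂ub z⟩
      have hne : ∀ n k, (H₂ '' Set.Icc (tt n k - T/2^n) (tt n k + T/2^n)).Nonempty :=
        fun n k => ⟨H₂ (tt n k), Set.mem_image_of_mem _
          (Set.mem_Icc.2 ⟨by linarith [hhpos n], by linarith [hhpos n]⟩)⟩
      have hvle : ∀ n k x, x ∈ Set.Icc (tt n k - T/2^n) (tt n k + T/2^n) → H₂ x ≤ vv n k := by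
        intro n k x hx
        have h15 : H₂ x ≤ sSup (H₂ '' Set.Icc (tt n k - T/2^n) (tt n k + T/2^n)) :=
          le_csSup (hbddim _) (Set.mem_image_of_mem _ hx)
        simp only [hvvdef]
        split
        · exact le_trans h15 (le_max_left _ _)
        · exact h15
      have hvlb : ∀ n k, -M ≤ vv n k := fun n k =>
        le_trans (hH₂lb _) (hvle n k (tt n k)
          (Set.mem_Icc.2 ⟨by linarith [hhpos n], by linarith [hhpos n]⟩))
      have hvub : ∀ n k, vv n k ≤ UB := by
        intro n k
        have h16 : sSup (H₂ '' Set.Icc (tt n k - T/2^n) (tt n k + T/2^n)) ≤ UB :=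
          csSup_le (hne n k) (by rintro y ⟨z, _, rfl⟩; exact hH₂ub z)
        simp only [hvvdef]
        split
        · exact max_le h16 hUB0
        · exact h16
      have hvNnn : ∀ n, 0 ≤ vv n (2^n) := by
        intro n
        simp only [hvvdef, if_pos rfl]
        exact le_max_right _ _
      -- covering
      have hcover : ∀ n, ∀ x : ℝ, 0 ≤ x → x ≤ T →
          ∃ j, j < 2^n ∧ tt n j ≤ x ∧ x ≤ tt n (j+1) := by
        intro n x hx0 hxT
        have hhn : 0 < T/2^n := hhpos n
        set j0 := ⌊x / (T/2^n)⌋₊ with hj0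
        rcases lt_or_ge j0 (2^n) with hcase | hcase
        · refine ⟨j0, hcase, ?_, ?_⟩
          · have h17 : (j0:ℝ) ≤ x / (T/2^n) := Nat.floor_le (div_nonneg hx0 hhn.le)
            rw [le_div_iff₀ hhn] at h17
            simpa [httdef] using h17
          · have h18 : x / (T/2^n) < (j0:ℝ) + 1 := Nat.lt_floor_add_one _
            rw [div_lt_iff₀ hhn] at h18
            simp only [httdef]
            push_cast
            linarith
        · have h19 : ((2:ℝ)^n) ≤ x / (T/2^n) := by
            have := (Nat.le_floor_iff (div_nonneg hx0 hhn.le)).1 hcase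
            push_cast at this
            exact this
          rw [le_div_iff₀ hhn] at h19
          have h20 : T ≤ x := by
            have h21 : ((2:ℝ)^n) * (T/2^n) = T := by field_simp
            linarith
          have hxeq : x = T := le_antisymm hxT h20
          have h1le : 1 ≤ 2^n := Nat.one_le_two_pow
          refine ⟨2^n - 1, by omega, ?_, ?_⟩
          · simp only [httdef]
            rw [Nat.cast_sub h1le]
            push_cast
            rw [hxeq]
            have h22 : ((2:ℝ)^n - 1) * (T/2^n) = T - T/2^n := by field_simp
            rw [h22]
            linarith [hhpos n]
          · have h23 : 2^n - 1 + 1 = 2^n := by omega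
            rw [h23, httN, hxeq]
      -- superhedging inequalities
      have hH₂g : ∀ n, ∀ x : ℝ, 0 ≤ x → H₂ x ≤ gg n x := by
        intro n x hx0
        rcases le_or_gt x T with hxT | hxT
        · obtain ⟨j, hj, hj1, hj2⟩ := hcover n x hx0 hxT
          have hs1 := (PL_seg_bounds (v := vv n) (hstep n) hj hj1 hj2).1
          have h24 : H₂ x ≤ vv n j := hvle n j x (Set.mem_Icc.2
            ⟨by linarith [httsucc n j, hhpos n], by linarith [httsucc n j]⟩)
          have h25 : H₂ x ≤ vv n (j+1) := hvle n (j+1) x (Set.mem_Icc.2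
            ⟨by linarith [httsucc n j], by linarith [httsucc n j, hhpos n]⟩)
          exact le_trans (le_min h24 h25) hs1
        · rw [show gg n x = vv n (2^n) from PL_top (hstep n) (by rw [httN]; exact hxT.le)]
          have h26 : x ∉ S := fun hx => absurd hx.2.2 (not_le.2 hxT)
          rw [show H₂ x = -M by simp [hH₂def, h26]]
          linarith [hvNnn n]
      have hsuper : ∀ n, ∀ x ∈ P1, H x ≤ gg n x := by
        intro n x hx
        rcases le_or_gt x T with hxT | hxT
        · have hxS : x ∈ S := ⟨hx, hP1sub hx, hxT⟩
          have h27 := hH₂g n x (hP1sub hx)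
          rwa [show H₂ x = H x by simp [hH₂def, hxS]] at h27
        · have h28 : H x ≤ 0 := hA x hx (by linarith)
          rw [show gg n x = vv n (2^n) from PL_top (hstep n) (by rw [httN]; exact hxT.le)]
          linarith [hvNnn n]
      have hgbdd : ∀ n, ∀ x : ℝ, 0 ≤ x → -M ≤ gg n x ∧ gg n x ≤ UB := by
        intro n x hx0
        rcases le_or_gt x T with hxT | hxT
        · obtain ⟨j, hj, hj1, hj2⟩ := hcover n x hx0 hxT
          have hs2 := PL_seg_bounds (v := vv n) (hstep n) hj hj1 hj2
          exact ⟨le_trans (le_min (hvlb n j) (hvlb n (j+1))) hs2.1,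
            le_trans hs2.2 (max_le (hvub n j) (hvub n (j+1)))⟩
        · rw [show gg n x = vv n (2^n) from PL_top (hstep n) (by rw [httN]; exact hxT.le)]
          exact ⟨hvlb n _, hvub n _⟩
      -- pointwise limit
      have hh0 : Tendsto (fun n : ℕ => T / 2^n) atTop (𝓝 0) := tendsto_div_two_pow T
      set L : ℝ → ℝ := fun x => if x < T then H₂ x else max (H₂ T) 0 with hLdef
      have husc' : ∀ x c, H₂ x < c → ∃ δ > 0, ∀ y : ℝ, |y - x| < δ → H₂ y < c := by
        intro x c hc
        have h29 := hH₂usc x c hc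
        rw [Metric.eventually_nhds_iff] at h29
        obtain ⟨δ, hδ, hδ2⟩ := h29
        exact ⟨δ, hδ, fun y hy => hδ2 (by rwa [Real.dist_eq])⟩
      have hlimpt : ∀ x : ℝ, 0 ≤ x → Tendsto (fun n => gg n x) atTop (𝓝 (L x)) := by
        intro x hx0
        rcases lt_or_ge x T with hxT | hxT
        · rw [show L x = H₂ x by simp [hLdef, hxT]]
          rw [tendsto_order]
          constructor
          · intro c hc
            filter_upwards with n
            exact lt_of_lt_of_le hc (hH₂g n x hx0)
          · intro c hc
            obtain ⟨δ, hδ, hδ2⟩ := husc' x ((H₂ x + c)/2) (by linarith)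
            have hev2 : ∀ᶠ n : ℕ in atTop, T / 2^n < min (δ/2) ((T - x)/2) :=
              hh0.eventually (gt_mem_nhds (lt_min (by positivity) (by linarith)))
            filter_upwards [hev2] with n hn
            rw [lt_min_iff] at hn
            obtain ⟨j, hj, hj1, hj2⟩ := hcover n x hx0 hxT.le
            have hsucc := httsucc n j
            have hj1N : j + 1 < 2^n := by
              by_contra hcon
              have hjeq : j + 1 = 2^n := by omega
              have hteq : tt n (j+1) = T := by rw [hjeq, httN]
              linarith [hn.2]
            have hvj : vv n j ≤ (H₂ x + c)/2 := by
              rw [hvvdef]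
              simp only
              rw [if_neg (by omega)]
              refine csSup_le (hne n j) ?_
              rintro y ⟨z, hz, rfl⟩
              rw [Set.mem_Icc] at hz
              refine (hδ2 z ?_).le
              rw [abs_lt]
              constructor <;> linarith [hn.1]
            have hvj1 : vv n (j+1) ≤ (H₂ x + c)/2 := by
              rw [hvvdef]
              simp only
              rw [if_neg (by omega)]
              refine csSup_le (hne n (j+1)) ?_
              rintro y ⟨z, hz, rfl⟩
              rw [Set.mem_Icc, hsucc] at hz
              refine (hδ2 z ?_).le
              rw [abs_lt]
              constructor <;> linarith [hn.1]
            have hs3 := (PL_seg_bounds (v := vv n) (hstep n) hj hj1 hj2).2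
            calc gg n x ≤ max (vv n j) (vv n (j+1)) := hs3
            _ ≤ (H₂ x + c)/2 := max_le hvj hvj1
            _ < c := by linarith
        · rw [show L x = max (H₂ T) 0 by simp [hLdef, not_lt.2 hxT]]
          have hgeq : ∀ n, gg n x = vv n (2^n) := fun n =>
            PL_top (hstep n) (by rw [httN]; linarith)
          have h30 : Tendsto (fun n => sSup (H₂ ''
              Set.Icc (tt n (2^n) - T/2^n) (tt n (2^n) + T/2^n))) atTop (𝓝 (H₂ T)) := by
            rw [tendsto_order]
            constructor
            · intro c hc
              filter_upwards with n
              refine lt_of_lt_of_le hc (le_csSup (hbddim _) (Set.mem_image_of_mem _ ?_))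
              rw [httN n, Set.mem_Icc]
              constructor <;> linarith [hhpos n]
            · intro c hc
              obtain ⟨δ, hδ, hδ2⟩ := husc' T ((H₂ T + c)/2) (by linarith)
              filter_upwards [hh0.eventually (gt_mem_nhds (show 0 < δ/2 by positivity))]
                with n hn
              refine lt_of_le_of_lt (csSup_le (hne n (2^n)) ?_)
                (show (H₂ T + c)/2 < c by linarith)
              rintro y ⟨z, hz, rfl⟩
              rw [httN n, Set.mem_Icc] at hz
              refine (hδ2 z ?_).le
              rw [abs_lt]
              constructor <;> linarith
          have h31 := h30.max (tendsto_const_nhds (x := (0:ℝ)))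
          refine Tendsto.congr (fun n => ?_) h31
          rw [hgeq n]
          simp only [hvvdef, if_pos rfl]
      -- dominated convergence
      have hgcont : ∀ n, Continuous (gg n) := by
        intro n
        simp only [hggdef]
        unfold PL
        exact continuous_const.add (continuous_finset_sum _ fun k _ =>
          continuous_const.mul ((continuous_const.sub continuous_id').max continuous_const))
      have hconv : Tendsto (fun n => ∫ x, gg n x ∂μ) atTop (𝓝 (∫ x, L x ∂μ)) := by
        refine tendsto_integral_of_dominated_convergence (bound := fun _ => max M UB)
          (fun n => (hgcont n).aestronglyMeasurable) (integrable_const _) ?_ ?_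
        · intro n
          filter_upwards [hae0] with x hx
          rw [Real.norm_eq_abs, abs_le]
          have h32 := hgbdd n x hx
          exact ⟨by linarith [le_max_left M UB], by linarith [le_max_right M UB]⟩
        · filter_upwards [hae0] with x hx
          exact hlimpt x hx
      -- comparisons of the limit integral
      have hLint : Integrable L μ := by
        refine integrable_of_ae_bounded (C := max M UB)
          ((Measurable.ite measurableSet_Iio hH₂meas measurable_const).aestronglyMeasurable) ?_
        filter_upwards with x
        rw [abs_le]
        by_cases hx : x < T
        · simp only [hLdef, if_pos hx]
          exact ⟨by linarith [hH₂lb x, le_max_left M UB],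
            by linarith [hH₂ub x, le_max_right M UB]⟩
        · simp only [hLdef, if_neg hx]
          refine ⟨by
            have := le_max_left M UB
            have h33 : (0:ℝ) ≤ max (H₂ T) 0 := le_max_right _ _
            linarith, ?_⟩
          exact le_trans (max_le (hH₂ub T) hUB0) (le_max_right M UB)
      have hlin2 : Integrable (fun x : ℝ => Δ * (x - s₀)) μ := by
        have h34 := (hmom.sub (integrable_const (s₀ : ℝ))).const_mul Δ
        simpa [Pi.sub_apply] using h34
      have hHreint : Integrable (fun x => G'' x - Δ * (x - s₀)) μ := hG''int.sub hlin2
      have hindint : Integrable (fun x => Set.indicator (Set.Ici T) Ψ x) μ :=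
        hΨint.indicator measurableSet_Ici
      have hcmp1 : ∫ x, L x ∂μ ≤ ∫ x, H₂ x ∂μ + ε/8 := by
        have h35 : ∫ x, L x ∂μ ≤ ∫ x, (H₂ x + Set.indicator (Set.Ici T) Ψ x) ∂μ := by
          refine integral_mono_ae hLint (hH₂int.add hindint) ?_
          filter_upwards [hae0] with x hx
          by_cases hxT : x < T
          · simp only [hLdef, if_pos hxT]
            have h36 : 0 ≤ Set.indicator (Set.Ici T) Ψ x :=
              Set.indicator_nonneg (fun y _ => hΨnn y) x
            linarith
          · push_neg at hxT
            simp only [hLdef, if_neg (not_lt.2 hxT)]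
            rw [Set.indicator_of_mem (Set.mem_Ici.mpr hxT) Ψ]
            have h37 : max (H₂ T) 0 ≤ UB := max_le (hH₂ub T) hUB0
            have h38 : -M ≤ H₂ x := hH₂lb x
            have h39 : (K+Δ)*T ≤ (K+Δ)*x := mul_le_mul_of_nonneg_left (by linarith) hKΔ
            have h40 : 0 ≤ Δ*s₀ := mul_nonneg hΔpos.le hs₀.le
            simp only [hΨdef]
            rw [abs_of_nonneg (by linarith : (0:ℝ) ≤ x)]
            rw [hUBeq] at h37
            simp only [hMdef] at h38
            nlinarith
        rw [integral_add hH₂int hindint] at h35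
        linarith
      have hcmp2 : ∫ x, H₂ x ∂μ ≤ ∫ x, (G'' x - Δ * (x - s₀)) ∂μ + ε/8 := by
        have h41 : ∫ x, H₂ x ∂μ
            ≤ ∫ x, ((G'' x - Δ * (x - s₀)) + Set.indicator (Set.Ici T) Ψ x) ∂μ := by
          refine integral_mono_ae hH₂int (hHreint.add hindint) ?_
          filter_upwards [haeP1, hae0] with x hx1 hx2
          have hGeq : G'' x = G x := by simp [hG''def, hx2]
          by_cases hxT : x ≤ T
          · have hxS : x ∈ S := ⟨hx1, hx2, hxT⟩
            simp only [hH₂def, if_pos hxS, hHdef]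
            have h42 : 0 ≤ Set.indicator (Set.Ici T) Ψ x :=
              Set.indicator_nonneg (fun y _ => hΨnn y) x
            rw [hGeq]
            linarith
          · push_neg at hxT
            have h43 : x ∉ S := fun hx => absurd hx.2.2 (not_le.2 hxT)
            simp only [hH₂def, if_neg h43]
            rw [Set.indicator_of_mem (show x ∈ Set.Ici T from hxT.le)]
            have h44 : -(K * |x|) ≤ G x := neg_le_of_abs_le (hG x)
            rw [abs_of_nonneg hx2] at h44
            have h45 : (K+Δ)*T ≤ (K+Δ)*x := mul_le_mul_of_nonneg_left hxT.le hKΔ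
            have h46 : 0 ≤ Δ*s₀ := mul_nonneg hΔpos.le hs₀.le
            simp only [hΨdef, hMdef]
            rw [abs_of_nonneg hx2, hGeq]
            nlinarith
        rw [integral_add hHreint hindint] at h41
        linarith
      have hcmp3 : ∫ x, (G'' x - Δ * (x - s₀)) ∂μ
          = ∫ x, G x ∂μ + Δ * (s₀ - ∫ x, x ∂μ) := by
        rw [integral_sub hG''int hlin2, integral_const_mul,
          integral_sub hmom (integrable_const _), integral_const, probReal_univ, ← hintG_eq]
        simp only [ENNReal.toReal_one, one_smul]
        ring
      have hεs : ε' * (s₀ - ∫ x, x ∂μ) ≤ ε/4 := by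
        have h47 : s₀ - ∫ x, x ∂μ ≤ s₀ := by linarith
        have h48 : 0 ≤ s₀ - ∫ x, x ∂μ := by linarith
        calc ε' * (s₀ - ∫ x, x ∂μ) ≤ ε' * s₀ := mul_le_mul_of_nonneg_left h47 hε'.le
        _ ≤ ε/4 := by
          rw [hε'def, div_mul_eq_mul_div, div_le_div_iff₀ (by positivity) (by norm_num)]
          nlinarith
      have hval_le : ∫ x, L x ∂μ < val + ε := by
        have h49 : Δ * (s₀ - ∫ x, x ∂μ)
            = b * (s₀ - ∫ x, x ∂μ) + ε' * (s₀ - ∫ x, x ∂μ) := by rw [hΔdef]; ring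
        rw [hval]
        linarith
      obtain ⟨n₀, hn₀⟩ : ∃ n, ∫ x, gg n x ∂μ < val + ε :=
        (hconv.eventually (gt_mem_nhds hval_le)).exists
      -- build the superhedge
      set X : Static 1 :=
        ⟨vv n₀ (2^n₀), 2^n₀,
          fun k => PLslope (2^n₀) (tt n₀) (vv n₀) ((k:ℕ)+1)
            - PLslope (2^n₀) (tt n₀) (vv n₀) (k:ℕ),
          fun _ => 0, fun k => tt n₀ ((k:ℕ)+1), fun k => httnn n₀ _⟩ with hXdef
      set D : Dyn 1 :=
        ⟨fun _ _ => Δ, fun _ => measurable_const, fun _ => ⟨|Δ|, fun _ => le_refl _⟩⟩ with hDdef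
      have hpay' : ∀ y : ℝ, X.const + ∑ k, X.coeff k * max (X.strike k - y) 0 = gg n₀ y := by
        intro y
        simp only [hXdef, hggdef]
        unfold PL
        congr 1
        exact Fin.sum_univ_eq_sum_range (fun j =>
          (PLslope (2^n₀) (tt n₀) (vv n₀) (j+1) - PLslope (2^n₀) (tt n₀) (vv n₀) j)
            * max (tt n₀ (j+1) - y) 0) (2^n₀)
      have hprice2 : X.price (fun _ K' => ∫ x, max (K' - x) 0 ∂μ) = ∫ x, gg n₀ x ∂μ := by
        rw [static_price_integral h0 X X.strike_nonneg]
        exact integral_congr_ae (Eventually.of_forall fun x => hpay' x)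
      unfold V
      refine le_trans (sInf_le ⟨X, D, fun _ _ => hΔpos.le, rfl, ?_⟩) ?_
      · rintro ω ⟨hω0, hω1⟩
        rw [EReal.coe_le_coe_iff]
        have hg : D.gains ω = Δ * (ω 1 - ω 0) := by
          unfold Dyn.gains
          rw [Fin.sum_univ_one]
          rfl
        rw [static_payoff, hpay', hg, hω0]
        have h50 := hsuper n₀ (ω 1) hω1
        simp only [hHdef] at h50
        linarith
      · rw [EReal.coe_le_coe_iff, hprice2]
        exact hn₀.le
    have htd : Tendsto (fun n : ℕ => ((val + 1/(n+1) : ℝ) : EReal)) atTop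
        (𝓝 ((val : ℝ) : EReal)) := by
      rw [EReal.tendsto_coe]
      have h51 := tendsto_one_div_add_atTop_nhds_zero_nat (𝕜 := ℝ)
      simpa using tendsto_const_nhds.add h51
    exact ge_of_tendsto' htd (fun n => hub _ (by positivity))

  · -- lower bound
    unfold V
    apply le_sInf
    rintro q ⟨X, D, hDpos, rfl, hsup⟩
    set Δ := D.pos 0 (restr 0 (fun _ => s₀)) with hΔdef
    have hΔ0 : 0 ≤ Δ := hDpos 0 _
    have hgains : ∀ ω : Path 1, D.gains ω = Δ * (ω 1 - ω 0) := by
      intro ω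
      unfold Dyn.gains
      rw [Fin.sum_univ_one]
      have h1 : restr (0 : Fin 1) ω = restr (0 : Fin 1) (fun _ => s₀) := by
        funext i
        exact absurd i.isLt (by simp)
      rw [show ((0 : Fin 1).succ) = (1 : Fin 2) from rfl,
        show (Fin.castSucc (0 : Fin 1)) = (0 : Fin 2) from rfl, h1]
    set gq : ℝ → ℝ := fun x => X.const + ∑ k, X.coeff k * max (X.strike k - x) 0 with hgqdef
    have hgqint : Integrable gq μ := by
      apply Integrable.add (integrable_const _)
      exact integrable_finset_sum _ fun k _ => ((integrable_put h0 (X.strike_nonneg k)).const_mul _)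
    have hprice : X.price (fun _ K' => ∫ x, max (K' - x) 0 ∂μ) = ∫ x, gq x ∂μ :=
      static_price_integral h0 X X.strike_nonneg
    have hineq : ∀ x ∈ P1, G x ≤ gq x + Δ * (x - s₀) := by
      intro x hx
      set ω : Path 1 := fun j => if j = 0 then s₀ else x with hω
      have hω0 : ω 0 = s₀ := by simp [hω]
      have hω1 : ω 1 = x := by norm_num [hω]
      have hmem : ω ∈ {ω : Path 1 | ω 0 = s₀ ∧ ω 1 ∈ P1} := ⟨hω0, by rw [hω1]; exact hx⟩
      have h2 := hsup ω hmem
      rw [EReal.coe_le_coe_iff] at h2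
      rw [hω1] at h2
      calc G x ≤ X.putPayoff ω + D.gains ω := h2
      _ = gq x + Δ * (x - s₀) := by rw [static_payoff, hgains, hω0, hω1]
    have hlin : Integrable (fun x : ℝ => Δ * (x - s₀)) μ := by
      have h := (hmom.sub (integrable_const (s₀ : ℝ))).const_mul Δ
      simpa [Pi.sub_apply] using h
    have hRHSint : Integrable (fun x => gq x + Δ * (x - s₀)) μ := hgqint.add hlin
    have hint1 : ∫ x, G x ∂μ ≤ ∫ x, (gq x + Δ * (x - s₀)) ∂μ := by
      apply integral_mono_ae hGint hRHSint
      filter_upwards [haeP1] with x hx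
      exact hineq x hx
    have hint2 : ∫ x, (gq x + Δ * (x - s₀)) ∂μ
        = ∫ x, gq x ∂μ + Δ * ((∫ x, x ∂μ) - s₀) := by
      rw [integral_add hgqint hlin, integral_const_mul,
        integral_sub hmom (integrable_const _), integral_const, probReal_univ]
      simp
    have hβΔ : β ≤ Δ := by
      have hconst : ∀ᶠ x in atTop, gq x = X.const := by
        filter_upwards [eventually_ge_atTop (∑ k, max (X.strike k) 0)] with x hx
        simp only [hgqdef]
        rw [Finset.sum_eq_zero, add_zero]
        intro k _
        have h3 : X.strike k ≤ x := by
          have h4 : max (X.strike k) 0 ≤ ∑ k, max (X.strike k) 0 :=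
            Finset.single_le_sum (f := fun k => max (X.strike k) 0)
              (fun k _ => le_max_right _ _) (Finset.mem_univ k)
          exact le_trans (le_trans (le_max_left (X.strike k) 0) h4) hx
        rw [max_eq_right (by linarith)]
        ring
      have htendR : Tendsto (fun x => (gq x + Δ * (x - s₀)) / x) atTop (𝓝 Δ) := by
        have h1 : Tendsto (fun x : ℝ => (X.const - Δ * s₀) * x⁻¹ + Δ) atTop
            (𝓝 ((X.const - Δ * s₀) * 0 + Δ)) :=
          (tendsto_inv_atTop_zero.const_mul _).add tendsto_const_nhds
        rw [mul_zero, zero_add] at h1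
        apply Tendsto.congr' _ h1
        filter_upwards [hconst, eventually_gt_atTop (0:ℝ)] with x hgx hx
        rw [hgx]
        field_simp
        ring
      have hle : ∀ᶠ x in atTop ⊓ Filter.principal P1,
          G x / x ≤ (gq x + Δ * (x - s₀)) / x := by
        rw [Filter.eventually_inf_principal]
        filter_upwards [eventually_gt_atTop (0:ℝ)] with x hx hxP
        exact div_le_div_of_nonneg_right (hineq x hxP) hx.le
      have hR2 : IsBoundedUnder (· ≤ ·) (atTop ⊓ Filter.principal P1)
          (fun x => (gq x + Δ * (x - s₀)) / x) :=
        (htendR.mono_left inf_le_left).isBoundedUnder_le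
      have h5 := Filter.limsup_le_limsup hle hFcobdd hR2
      rw [hβ] at h5
      rwa [(htendR.mono_left inf_le_left).limsup_eq] at h5
    rw [EReal.coe_le_coe_iff, hprice]
    have hmax : max β 0 * (s₀ - ∫ x, x ∂μ) ≤ Δ * (s₀ - ∫ x, x ∂μ) :=
      mul_le_mul_of_nonneg_right (max_le hβΔ hΔ0) (by linarith)
    rw [hval]
    linarith

/-- one-period duality gap with puts: with `n = 1`,
`𝔓 = {s₀} × 𝔓₁` for a closed unbounded `𝔓₁ ⊆ ℝ₊`, and `μ` a calibrated marginal
with mean at most `s₀`, the put-based superhedging price of `G` equals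
`∫ G dμ + β⁺ (s₀ − ∫ x μ(dx))` where `β = limsup_{x→∞, x∈𝔓₁} G(x)/x`;
in particular for a call payoff the correction is exactly `s₀ − ∫ x μ(dx)`,
and a duality gap arises whenever `∫ x μ(dx) < s₀`. -/
theorem one_period_duality_gap_puts
    {s₀ : ℝ} (hs₀ : 0 < s₀)
    (P1 : Set ℝ) (hP1closed : IsClosed P1) (hP1sub : P1 ⊆ Set.Ici 0)
    (hP1unb : ¬ BddAbove P1)
    (μ : Measure ℝ) (hprob : IsProbabilityMeasure μ) (hμP1 : μ P1 = 1)
    (hmom : Integrable (fun x => x) μ) (hmean : ∫ x, x ∂μ ≤ s₀)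
    (G : ℝ → ℝ) (K : ℝ) (hG : ∀ x, |G x| ≤ K * |x|)
    (hGusc : UpperSemicontinuousOn G (Set.Ici 0))
    (β : ℝ) (hβ : Filter.limsup (fun x => G x / x) (atTop ⊓ Filter.principal P1) = β) :
    V (n := 1) Static.putPayoff (fun _ K' => ∫ x, max (K' - x) 0 ∂μ)
        {ω : Path 1 | ω 0 = s₀ ∧ ω 1 ∈ P1} (fun ω => ((G (ω 1) : ℝ) : EReal)) =
      ((∫ x, G x ∂μ + max β 0 * (s₀ - ∫ x, x ∂μ) : ℝ) : EReal) ∧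
    (∀ K' : ℝ, 0 ≤ K' →
      V (n := 1) Static.putPayoff (fun _ K'' => ∫ x, max (K'' - x) 0 ∂μ)
          {ω : Path 1 | ω 0 = s₀ ∧ ω 1 ∈ P1} (fun ω => ((max (ω 1 - K') 0 : ℝ) : EReal)) =
        ((∫ x, max (x - K') 0 ∂μ + (s₀ - ∫ x, x ∂μ) : ℝ) : EReal)) ∧
    (∫ x, x ∂μ < s₀ → ∀ K' : ℝ, 0 ≤ K' →
      ((∫ x, max (x - K') 0 ∂μ : ℝ) : EReal) <
        V (n := 1) Static.putPayoff (fun _ K'' => ∫ x, max (K'' - x) 0 ∂μ)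
          {ω : Path 1 | ω 0 = s₀ ∧ ω 1 ∈ P1} (fun ω => ((max (ω 1 - K') 0 : ℝ) : EReal))) := by
  have hmain := main_duality hs₀ P1 hP1closed hP1sub hP1unb μ hprob hμP1 hmom hmean
    G K hG hGusc β hβ
  have hpart2 : ∀ K' : ℝ, 0 ≤ K' →
      V (n := 1) Static.putPayoff (fun _ K'' => ∫ x, max (K'' - x) 0 ∂μ)
          {ω : Path 1 | ω 0 = s₀ ∧ ω 1 ∈ P1} (fun ω => ((max (ω 1 - K') 0 : ℝ) : EReal)) =
        ((∫ x, max (x - K') 0 ∂μ + (s₀ - ∫ x, x ∂μ) : ℝ) : EReal) := by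
    intro K' hK'
    have hG2 : ∀ x : ℝ, |max (x - K') 0| ≤ 1 * |x| := by
      intro x
      rw [one_mul, abs_of_nonneg (le_max_right _ _)]
      rcases le_or_gt x K' with h | h
      · rw [max_eq_right (by linarith)]
        exact abs_nonneg x
      · rw [max_eq_left (by linarith)]
        have hx0 : 0 ≤ x := by linarith
        rw [abs_of_nonneg hx0]
        linarith
    have husc2 : UpperSemicontinuousOn (fun x : ℝ => max (x - K') 0) (Set.Ici 0) :=
      ((((continuous_id'.sub continuous_const).max
        continuous_const).upperSemicontinuous).upperSemicontinuousOn _)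
    haveI hFne : (atTop ⊓ Filter.principal P1).NeBot := neBot_atTop_inf_principal hP1unb
    have hβ2 : Filter.limsup (fun x : ℝ => max (x - K') 0 / x)
        (atTop ⊓ Filter.principal P1) = 1 := by
      have htd : Tendsto (fun x : ℝ => max (x - K') 0 / x) atTop (𝓝 1) := by
        have h1 : Tendsto (fun x : ℝ => 1 - K' * x⁻¹) atTop (𝓝 (1 - K' * 0)) :=
          tendsto_const_nhds.sub (tendsto_inv_atTop_zero.const_mul K')
        rw [mul_zero, sub_zero] at h1
        refine h1.congr' ?_
        filter_upwards [eventually_gt_atTop (max K' 1)] with x hx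
        have hxK : K' < x := lt_of_le_of_lt (le_max_left _ _) hx
        have hx0 : (0:ℝ) < x := lt_of_le_of_lt (by positivity) hx
        rw [max_eq_left (by linarith)]
        field_simp
      exact (htd.mono_left inf_le_left).limsup_eq
    have h2 := main_duality hs₀ P1 hP1closed hP1sub hP1unb μ hprob hμP1 hmom hmean
      (fun x => max (x - K') 0) 1 hG2 husc2 1 hβ2
    rw [show max (1:ℝ) 0 = 1 from max_eq_left (by norm_num), one_mul] at h2
    exact h2
  refine ⟨hmain, hpart2, ?_⟩
  intro hlt K' hK'
  rw [hpart2 K' hK', EReal.coe_lt_coe_iff]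
  linarith

end RobustFin
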